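/- arXiv:0901.0490 — 3 statements merged into one kernel-verified Lean document; each statement's English description precedes it below -/
import Mathlib

section
/- Let (V, m) be an A_∞-algebra over Z/2 with δ = m_1, and choose linear maps i : H*(V) → V, p : V → H*(V), h : V → V satisfying p ∘ i = id and id + i ∘ p = δh + hδ, with i landing in cocycles and p induced by projection of cocycles. Define μ_3(α_1,α_2,α_3) = p( m_3(a_1,a_2,a_3) + m_2(a_1, h m_2(a_2,a_3)) + m_2(h m_2(a_1,a_2), a_3) ), where a_k = i(α_k). If μ_2(α_1,α_2) = 0 = μ_2(α_2,α_3), then the image of μ_3(α_1,α_2,α_3) in H*(V)/(im μ_2(α_1,·) + im μ_2(·,α_3)) equals the Massey triple product {α_1, α_2, α_3}. -/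
/- STATEMENT 13: Let (V,m) be an A_∞-algebra over Z/2 with δ = m_1 and homotopy
retraction data i, p, h (p∘i = id, id + i∘p = δh + hδ, i lands in cocycles, p kills
coboundaries).  Define
  μ_3(α₁,α₂,α₃) = p( m₃(a₁,a₂,a₃) + m₂(a₁, h m₂(a₂,a₃)) + m₂(h m₂(a₁,a₂), a₃) ),
with aₖ = i(αₖ), and μ₂(α,β) = p(m₂(i α, i β)).  If μ₂(α₁,α₂) = 0 = μ₂(α₂,α₃), then
the image of μ₃(α₁,α₂,α₃) in H*(V)/(im μ₂(α₁,·) + im μ₂(·,α₃)) agrees with the Massey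
triple product {α₁,α₂,α₃}: for every defining system x, y (δx = m₂(a₁,a₂),
δy = m₂(a₂,a₃)) the class of the Massey representative differs from μ₃(α₁,α₂,α₃) by an
element of im μ₂(α₁,·) + im μ₂(·,α₃). -/

open Finset

section CoreAInfty

variable {V : Type*} {W : Type*}

/-- Additivity in each slot; over `ZMod 2` this is equivalent to multilinearity. -/
def IsMultiadditive [AddCommGroup V] [AddCommGroup W] (m : ∀ k : ℕ, (Fin k → V) → W) : Prop :=
  ∀ (k : ℕ) (f : Fin k → V) (s : Fin k) (x y : V),
    m k (Function.update f s (x + y)) = m k (Function.update f s x) + m k (Function.update f s y)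

/-- The segment `v a, v (a+1), …, v (a+k-1)` of a sequence of arguments. -/
def seg (v : ℕ → V) (a : ℕ) (k : ℕ) : Fin k → V := fun t => v (a + (t : ℕ))

/-- `outer_{i+1+k} ∘ (1^{⊗i} ⊗ inner_j ⊗ 1^{⊗k})` applied to the arguments `v 0, v 1, …`
(only the first `i + j + k` entries of `v` are relevant). -/
def insComp (outer : ∀ k : ℕ, (Fin k → V) → W)
    (inner : ∀ k : ℕ, (Fin k → V) → V) (i j k : ℕ) (v : ℕ → V) : W :=
  outer (i + 1 + k) (fun t =>
    if (t : ℕ) < i then v (t : ℕ)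
    else if (t : ℕ) = i then inner j (seg v i j)
    else v ((t : ℕ) + j - 1))

/-- The A_∞ relations: `∑_{i+j+k=l} m_{i+1+k} ∘ (1^{⊗i} ⊗ m_j ⊗ 1^{⊗k}) = 0` for all `l ≥ 1`. -/
def AInftyRel [AddCommGroup V] [Module (ZMod 2) V] (m : ∀ k : ℕ, (Fin k → V) → V) : Prop :=
  ∀ l : ℕ, 1 ≤ l → ∀ v : ℕ → V,
    (∑ i ∈ Finset.range (l + 1), ∑ j ∈ Finset.range (l + 1), ∑ k ∈ Finset.range (l + 1),
      if 1 ≤ j ∧ i + j + k = l then insComp m m i j k v else 0) = 0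

/-- An A_∞-algebra structure on `V` over `ZMod 2` (signs are irrelevant in characteristic 2). -/
def IsAInfty [AddCommGroup V] [Module (ZMod 2) V] (m : ∀ k : ℕ, (Fin k → V) → V) : Prop :=
  IsMultiadditive m ∧ AInftyRel m

/-- The A_n relations: the A_∞ relations only for `1 ≤ l ≤ n`. -/
def AnRel [AddCommGroup V] [Module (ZMod 2) V] (m : ∀ k : ℕ, (Fin k → V) → V) (n : ℕ) : Prop :=
  ∀ l : ℕ, 1 ≤ l → l ≤ n → ∀ v : ℕ → V,
    (∑ i ∈ Finset.range (l + 1), ∑ j ∈ Finset.range (l + 1), ∑ k ∈ Finset.range (l + 1),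
      if 1 ≤ j ∧ i + j + k = l then insComp m m i j k v else 0) = 0

/-- An A_n-algebra structure on `V` over `ZMod 2`. -/
def IsAn [AddCommGroup V] [Module (ZMod 2) V] (m : ∀ k : ℕ, (Fin k → V) → V) (n : ℕ) : Prop :=
  IsMultiadditive m ∧ AnRel m n

/-- The differential `δ = m_1`. -/
def dl (m : ∀ k : ℕ, (Fin k → V) → W) (v : V) : W := m 1 (fun _ => v)

/-- The binary operation `m_2`. -/
def mu2 (m : ∀ k : ℕ, (Fin k → V) → W) (a b : V) : W := m 2 ![a, b]

/-- The ternary operation `m_3`. -/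
def mu3 (m : ∀ k : ℕ, (Fin k → V) → W) (a b c : V) : W := m 3 ![a, b, c]

end CoreAInfty

section Helpers
variable {V : Type*} [AddCommGroup V] [Module (ZMod 2) V]

lemma char2V (u : V) : u + u = 0 := by
  have h := two_smul (ZMod 2) u
  rw [show (2 : ZMod 2) = 0 by decide, zero_smul] at h
  exact h.symm

lemma dl_add (m : ∀ k : ℕ, (Fin k → V) → V) (hma : IsMultiadditive m) (a b : V) :
    dl m (a + b) = dl m a + dl m b := by
  have h := hma 1 (fun _ => a) 0 a b
  have e : ∀ x : V, Function.update (fun _ : Fin 1 => a) 0 x = fun _ => x := by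
    intro x; funext t; fin_cases t; simp
  simpa [dl, e] using h

lemma mu2_add_left (m : ∀ k : ℕ, (Fin k → V) → V) (hma : IsMultiadditive m) (a b c : V) :
    mu2 m (a + b) c = mu2 m a c + mu2 m b c := by
  have h := hma 2 ![a, c] 0 a b
  have e : ∀ x : V, Function.update ![a, c] (0 : Fin 2) x = ![x, c] := by
    intro x; funext t; fin_cases t <;> simp
  simpa [mu2, e] using h

lemma mu2_add_right (m : ∀ k : ℕ, (Fin k → V) → V) (hma : IsMultiadditive m) (a b c : V) :
    mu2 m a (b + c) = mu2 m a b + mu2 m a c := by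
  have h := hma 2 ![a, b] 1 b c
  have e : ∀ x : V, Function.update ![a, b] (1 : Fin 2) x = ![a, x] := by
    intro x; funext t; fin_cases t <;> simp
  simpa [mu2, e] using h

lemma seg_one (v : ℕ → V) (a : ℕ) : seg v a 1 = fun _ => v a := by
  funext s; fin_cases s; simp [seg]

lemma leibniz (m : ∀ k : ℕ, (Fin k → V) → V) (hr : AInftyRel m) (a b : V) :
    dl m (mu2 m a b) = mu2 m (dl m a) b + mu2 m a (dl m b) := by
  set v : ℕ → V := fun n => if n = 0 then a else b with hv
  have h := hr 2 (by norm_num) v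
  simp only [Finset.sum_range_succ, Finset.sum_range_zero] at h
  norm_num at h
  have e1 : insComp m m 0 2 0 v = dl m (mu2 m a b) := by
    unfold insComp dl mu2
    congr 1
    funext t; fin_cases t; simp
    congr 1
    funext s; fin_cases s <;> simp [seg, hv]
  have e2 : insComp m m 0 1 1 v = mu2 m (dl m a) b := by
    unfold insComp dl mu2
    congr 1
    funext t; fin_cases t <;> simp [seg_one, hv]
  have e3 : insComp m m 1 1 0 v = mu2 m a (dl m b) := by
    unfold insComp dl mu2
    congr 1
    funext t; fin_cases t <;> simp [seg_one, hv]
  rw [e1, e2, e3] at h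
  calc dl m (mu2 m a b)
      = dl m (mu2 m a b)
        + (mu2 m (dl m a) b + dl m (mu2 m a b) + mu2 m a (dl m b)) := by rw [h, add_zero]
    _ = mu2 m (dl m a) b + mu2 m a (dl m b)
        + (dl m (mu2 m a b) + dl m (mu2 m a b)) := by abel
    _ = mu2 m (dl m a) b + mu2 m a (dl m b) := by rw [char2V, add_zero]

end Helpers


theorem stmt13 {V : Type*} [AddCommGroup V] [Module (ZMod 2) V]
    (H : Type*) [AddCommGroup H] [Module (ZMod 2) H]
    (m : ∀ k : ℕ, (Fin k → V) → V) (hm : IsAInfty m)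
    (i : H → V) (p : V → H) (h : V → V)
    (hiadd : ∀ x y, i (x + y) = i x + i y)
    (hpadd : ∀ x y, p (x + y) = p x + p y)
    (hhadd : ∀ x y, h (x + y) = h x + h y)
    (hpi : ∀ α, p (i α) = α)
    (hicoc : ∀ α, dl m (i α) = 0)
    (hhom : ∀ v : V, v + i (p v) = dl m (h v) + h (dl m v))
    (hpb : ∀ u : V, p (dl m u) = 0)
    (α₁ α₂ α₃ : H)
    (h12 : p (mu2 m (i α₁) (i α₂)) = 0)
    (h23 : p (mu2 m (i α₂) (i α₃)) = 0) :
    ∀ x y : V, dl m x = mu2 m (i α₁) (i α₂) → dl m y = mu2 m (i α₂) (i α₃) →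
      ∃ β γ : H,
        p (mu3 m (i α₁) (i α₂) (i α₃)
            + mu2 m (i α₁) (h (mu2 m (i α₂) (i α₃)))
            + mu2 m (h (mu2 m (i α₁) (i α₂))) (i α₃))
          + p (mu3 m (i α₁) (i α₂) (i α₃) + mu2 m (i α₁) y + mu2 m x (i α₃))
        = p (mu2 m (i α₁) (i β)) + p (mu2 m (i γ) (i α₃)) := by
  intro x y hx hy
  obtain ⟨hma, hr⟩ := hm
  set a₁ := i α₁; set a₂ := i α₂; set a₃ := i α₃
  set v12 := mu2 m a₁ a₂ with hv12
  set v23 := mu2 m a₂ a₃ with hv23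
  -- basic facts
  have h0 : h (0 : V) = 0 := by
    have := hhadd 0 0
    rw [add_zero] at this
    exact (left_eq_add.mp this)
  have i0 : i (0 : H) = 0 := by
    have := hiadd 0 0
    rw [add_zero] at this
    exact (left_eq_add.mp this)
  have mu2z : ∀ c : V, mu2 m (0 : V) c = 0 := by
    intro c
    have := mu2_add_left m hma 0 0 c
    rw [add_zero] at this
    exact left_eq_add.mp this
  have mu2z' : ∀ c : V, mu2 m c (0 : V) = 0 := by
    intro c
    have := mu2_add_right m hma c 0 0
    rw [add_zero] at this
    exact left_eq_add.mp this
  have cancel : ∀ u w : V, u + w = 0 → u = w := by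
    intro u w huw
    calc u = u + (w + w) := by rw [char2V, add_zero]
      _ = (u + w) + w := by abel
      _ = w := by rw [huw, zero_add]
  have cancelH : ∀ u w : H, u + w = 0 → u = w := by
    intro u w huw
    have c2 : w + w = 0 := by
      have h2 := two_smul (ZMod 2) w
      rw [show (2 : ZMod 2) = 0 by decide, zero_smul] at h2
      exact h2.symm
    calc u = u + (w + w) := by rw [c2, add_zero]
      _ = (u + w) + w := by abel
      _ = w := by rw [huw, zero_add]
  -- d v12 = 0, d v23 = 0
  have dv12 : dl m v12 = 0 := by
    rw [hv12, leibniz m hr, hicoc, hicoc, mu2z, mu2z', add_zero]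
  have dv23 : dl m v23 = 0 := by
    rw [hv23, leibniz m hr, hicoc, hicoc, mu2z, mu2z', add_zero]
  -- d (h v12) = v12, d (h v23) = v23
  have dh12 : dl m (h v12) = v12 := by
    have := hhom v12
    rw [h12, i0, add_zero, dv12, h0, add_zero] at this
    exact this.symm
  have dh23 : dl m (h v23) = v23 := by
    have := hhom v23
    rw [h23, i0, add_zero, dv23, h0, add_zero] at this
    exact this.symm
  -- the cocycles
  set z := h v23 + y with hz
  set w := h v12 + x with hw
  have dz : dl m z = 0 := by
    rw [hz, dl_add m hma, dh23, hy]; exact char2V _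
  have dw : dl m w = 0 := by
    rw [hw, dl_add m hma, dh12, hx]; exact char2V _
  refine ⟨p z, p w, ?_⟩
  -- reduction lemmas
  have redL : p (mu2 m a₁ z) = p (mu2 m a₁ (i (p z))) := by
    have hez : z + i (p z) = dl m (h z) := by
      have := hhom z
      rwa [dz, h0, add_zero] at this
    have hkey : mu2 m a₁ z + mu2 m a₁ (i (p z)) = dl m (mu2 m a₁ (h z)) := by
      rw [← mu2_add_right m hma, hez, leibniz m hr, hicoc, mu2z, zero_add]
    have : p (mu2 m a₁ z) + p (mu2 m a₁ (i (p z))) = 0 := by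
      rw [← hpadd, hkey, hpb]
    exact cancelH _ _ this
  have redR : p (mu2 m w a₃) = p (mu2 m (i (p w)) a₃) := by
    have hez : w + i (p w) = dl m (h w) := by
      have := hhom w
      rwa [dw, h0, add_zero] at this
    have hkey : mu2 m w a₃ + mu2 m (i (p w)) a₃ = dl m (mu2 m (h w) a₃) := by
      rw [← mu2_add_left m hma, hez, leibniz m hr, hicoc, mu2z', add_zero]
    have : p (mu2 m w a₃) + p (mu2 m (i (p w)) a₃) = 0 := by
      rw [← hpadd, hkey, hpb]
    exact cancelH _ _ this
  -- assemble
  rw [← hpadd]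
  have lhs_eq :
      (mu3 m a₁ a₂ a₃ + mu2 m a₁ (h v23) + mu2 m (h v12) a₃)
        + (mu3 m a₁ a₂ a₃ + mu2 m a₁ y + mu2 m x a₃)
      = mu2 m a₁ z + mu2 m w a₃ := by
    rw [hz, hw, mu2_add_right m hma, mu2_add_left m hma]
    have c2 : mu3 m a₁ a₂ a₃ + mu3 m a₁ a₂ a₃ = 0 := char2V _
    calc (mu3 m a₁ a₂ a₃ + mu2 m a₁ (h v23) + mu2 m (h v12) a₃)
          + (mu3 m a₁ a₂ a₃ + mu2 m a₁ y + mu2 m x a₃)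
        = (mu3 m a₁ a₂ a₃ + mu3 m a₁ a₂ a₃)
          + (mu2 m a₁ (h v23) + mu2 m a₁ y + (mu2 m (h v12) a₃ + mu2 m x a₃)) := by abel
      _ = mu2 m a₁ (h v23) + mu2 m a₁ y + (mu2 m (h v12) a₃ + mu2 m x a₃) := by
          rw [c2, zero_add]
  rw [lhs_eq, hpadd, redL, redR]
end

section
/- The reflection map τ : ⊕_{i=1}^n A^{⊗i} → ⊕_{i=1}^n A^{⊗i} defined by τ(a_1 ⊗ ⋯ ⊗ a_k) = a_k ⊗ ⋯ ⊗ a_1 is a chain isomorphism from the n-th order linearized complex (A_{(n)}, ∂_{(n)}) of a differential ∂ to the n-th order linearized complex of the reversed differential ∂̄, where ∂̄ is obtained from ∂ by reversing the order of every word in the differential of each generator. In particular, the n-th order linearized homologies of (A, ∂) and (A, ∂̄) are isomorphic. -/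
/- STATEMENT 15: The reflection map τ(a₁ ⊗ ⋯ ⊗ a_k) = a_k ⊗ ⋯ ⊗ a₁ is a chain
isomorphism from the n-th order linearized complex (A_{(n)}, ∂_{(n)}) of a DGA
differential ∂ to the n-th order linearized complex of the reversed differential ∂̄
(whose components are ∂̄_k = τ_k ∘ ∂_k).  In particular, the n-th order linearized
homologies of (A,∂) and (A,∂̄) are isomorphic.  (This corresponds to the DGA of the
Legendrian mirror.) -/


section TensorAlg

/-- The tensor algebra over `ZMod 2` on generators `q_1, …, q_N`, modelled as the
monoid algebra of the free monoid on `Fin N` (the basis is the set of words). -/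
abbrev TA (N : ℕ) := MonoidAlgebra (ZMod 2) (FreeMonoid (Fin N))

/-- The generator `q_i`. -/
noncomputable def gen {N : ℕ} (i : Fin N) : TA N := MonoidAlgebra.single (FreeMonoid.of i) 1

/-- A map is a derivation (Leibniz rule; no signs over `ZMod 2`). -/
def IsLeibniz {N : ℕ} (D : TA N →ₗ[ZMod 2] TA N) : Prop :=
  ∀ x y : TA N, D (x * y) = D x * y + x * D y

/-- The component coefficients of `D`: `coeffD D i w` is the coefficient of the word `w`
in `D q_i`; for words of length `k` these are the matrix entries of `∂_k : A → A^{⊗k}`. -/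
noncomputable def coeffD {N : ℕ} (D : TA N →ₗ[ZMod 2] TA N) (i : Fin N) (w : List (Fin N)) : ZMod 2 :=
  (D (gen i)).coeff (FreeMonoid.ofList w)

/-- The degree of a word with respect to a grading `g` of the generators. -/
def wdeg {N : ℕ} (g : Fin N → ℤ) (w : FreeMonoid (Fin N)) : ℤ :=
  ((FreeMonoid.toList w).map g).sum

/-- `D` has degree `-1`. -/
def IsDegMinusOne {N : ℕ} (g : Fin N → ℤ) (D : TA N →ₗ[ZMod 2] TA N) : Prop :=
  ∀ i : Fin N, ∀ w ∈ (D (gen i)).coeff.support, wdeg g w = g i - 1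

/-- The constant part `∂_0` of `D` vanishes. -/
def ConstTermZero {N : ℕ} (D : TA N →ₗ[ZMod 2] TA N) : Prop :=
  ∀ i : Fin N, (D (gen i)).coeff (1 : FreeMonoid (Fin N)) = 0

/-- The family of maps on the dual `A* ≅ (Fin N → ZMod 2)` adjoint to coefficients
`c`: `m_k(f₁,…,f_k)(q) = ∑_{w of length k} c q w · f₁(w₁)⋯f_k(w_k)`. -/
noncomputable def dualm {N : ℕ} (c : Fin N → List (Fin N) → ZMod 2) :
    ∀ k : ℕ, (Fin k → (Fin N → ZMod 2)) → (Fin N → ZMod 2) :=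
  fun k f q => ∑ w : Fin k → Fin N, c q (List.ofFn w) * ∏ t, f t (w t)

end TensorAlg

/-- Projection of the tensor algebra onto the span of the words of length `1, …, n`
(a choice of representatives for the quotient `A_{(n)}`). -/
noncomputable def projLen {N : ℕ} (n : ℕ) (x : TA N) : TA N :=
  MonoidAlgebra.ofCoeff (Finsupp.filter
    (fun w : FreeMonoid (Fin N) =>
      1 ≤ (FreeMonoid.toList w).length ∧ (FreeMonoid.toList w).length ≤ n) x.coeff)

/-- Reversal of words, as an equivalence of the free monoid with itself. -/
def revEquiv {N : ℕ} : FreeMonoid (Fin N) ≃ FreeMonoid (Fin N) where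
  toFun w := FreeMonoid.ofList (FreeMonoid.toList w).reverse
  invFun w := FreeMonoid.ofList (FreeMonoid.toList w).reverse
  left_inv w := by simp
  right_inv w := by simp

/-- The reflection map `τ(a₁ ⊗ ⋯ ⊗ a_k) = a_k ⊗ ⋯ ⊗ a₁` on the tensor algebra. -/
noncomputable def revA {N : ℕ} (x : TA N) : TA N := MonoidAlgebra.ofCoeff (Finsupp.equivMapDomain revEquiv x.coeff)


section Helpers
variable {N : ℕ}

lemma revA_apply (x : TA N) (w : FreeMonoid (Fin N)) :
    (revA x).coeff w = x.coeff (FreeMonoid.ofList (FreeMonoid.toList w).reverse) := by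
  simp [revA, Finsupp.equivMapDomain_apply, revEquiv]

lemma revA_revA' (x : TA N) : revA (revA x) = x := by
  ext w; simp [revA_apply]

lemma revA_add (x y : TA N) : revA (x + y) = revA x + revA y := by
  ext w; rw [revA_apply, MonoidAlgebra.coeff_add, Finsupp.add_apply, MonoidAlgebra.coeff_add, Finsupp.add_apply, revA_apply, revA_apply]

lemma revA_zero : revA (0 : TA N) = 0 := by ext w; simp [revA_apply]

lemma revA_single (a : FreeMonoid (Fin N)) (b : ZMod 2) :
    revA (MonoidAlgebra.single a b)
      = MonoidAlgebra.single (FreeMonoid.ofList (FreeMonoid.toList a).reverse) b := by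
  simp [revA, MonoidAlgebra.coeff_single, Finsupp.equivMapDomain_single, revEquiv]

lemma revA_one : revA (1 : TA N) = 1 := by
  rw [MonoidAlgebra.one_def]
  simpa using revA_single (1 : FreeMonoid (Fin N)) 1

lemma revA_mul (x y : TA N) : revA (x * y) = revA y * revA x := by
  induction x using MonoidAlgebra.induction_linear with
  | zero => simp [revA_zero]
  | add a b ha hb => rw [add_mul, revA_add, ha, hb, revA_add, mul_add]
  | single a c =>
    induction y using MonoidAlgebra.induction_linear with
    | zero => simp [revA_zero]
    | add a b ha hb => rw [mul_add, revA_add, ha, hb, revA_add, add_mul]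
    | single a' c' =>
      rw [MonoidAlgebra.single_mul_single]
      rw [revA_single, revA_single, revA_single, MonoidAlgebra.single_mul_single]
      congr 1
      · simp [FreeMonoid.toList_mul]
      · ring

lemma deriv_one_TA (D : TA N →ₗ[ZMod 2] TA N)
    (h : D ((1 : TA N) * 1) = D 1 * 1 + 1 * D 1) : D 1 = 0 := by
  simp only [one_mul, mul_one] at h
  exact left_eq_add.mp h

lemma revA_gen (i : Fin N) : revA (gen i) = gen i := by
  rw [gen]
  rw [revA_single]
  congr 1

lemma key (D Dbar : TA N →ₗ[ZMod 2] TA N)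
    (hleib : ∀ x y : TA N, D (x * y) = D x * y + x * D y)
    (hleib' : ∀ x y : TA N, Dbar (x * y) = x * Dbar y + Dbar x * y)
    (hgen : ∀ i, Dbar (gen i) = revA (D (gen i))) :
    ∀ x : TA N, revA (D x) = Dbar (revA x) := by
  have hD1 : D 1 = 0 := deriv_one_TA D (hleib 1 1)
  have hDbar1 : Dbar 1 = 0 := by
    have h := hleib' 1 1
    simp only [one_mul, mul_one] at h
    exact left_eq_add.mp h
  have hword : ∀ l : List (Fin N),
      revA (D (MonoidAlgebra.single (FreeMonoid.ofList l) (1 : ZMod 2)))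
        = Dbar (revA (MonoidAlgebra.single (FreeMonoid.ofList l) 1)) := by
    intro l
    induction l with
    | nil =>
      rw [show (MonoidAlgebra.single (FreeMonoid.ofList ([] : List (Fin N))) (1 : ZMod 2))
        = (1 : TA N) from (MonoidAlgebra.one_def).symm, hD1, revA_zero, revA_one, hDbar1]
    | cons i t ih =>
      have hsplit : (MonoidAlgebra.single (FreeMonoid.ofList (i :: t)) (1 : ZMod 2))
          = gen i * MonoidAlgebra.single (FreeMonoid.ofList t) (1 : ZMod 2) := by
        simp only [gen]
        rw [MonoidAlgebra.single_mul_single]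
        simp
      rw [hsplit, hleib, revA_add, revA_mul, revA_mul, revA_mul, hleib', ih, revA_gen, hgen i]
  intro x
  induction x using MonoidAlgebra.induction_linear with
  | zero => simp [revA_zero]
  | add a b ha hb => rw [map_add, revA_add, ha, hb, revA_add, map_add]
  | single a c =>
    have hc : c = 0 ∨ c = 1 := by revert c; decide
    rcases hc with rfl | rfl
    · simp [revA_zero]
    · have h := hword (FreeMonoid.toList a)
      rw [FreeMonoid.ofList_toList] at h
      exact h

lemma revA_projLen (n : ℕ) (x : TA N) : revA (projLen n x) = projLen n (revA x) := by
  ext w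
  rw [revA_apply]
  simp [projLen, Finsupp.filter_apply, revA_apply]

end Helpers

theorem stmt15 {N : ℕ} (n : ℕ) (D Dbar : TA N →ₗ[ZMod 2] TA N)
    (hleib : IsLeibniz D) (hD2 : ∀ x, D (D x) = 0) (h0 : ConstTermZero D)
    (hleib' : ∀ x y : TA N, Dbar (x * y) = x * Dbar y + Dbar x * y)
    (hD2' : ∀ x, Dbar (Dbar x) = 0) (h0' : ConstTermZero Dbar)
    -- ∂̄ is the reversed differential: its components are τ_k ∘ ∂_k
    (hrev : ∀ (i : Fin N) (w : List (Fin N)), coeffD Dbar i w = coeffD D i w.reverse) :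
    -- τ is a chain map between the n-th order linearized complexes …
    (∀ x : TA N, revA (projLen n (D (projLen n x)))
        = projLen n (Dbar (projLen n (revA x))))
    -- … and an involution, hence a chain isomorphism; in particular the n-th order
    -- linearized homologies of (A,∂) and (A,∂̄) are isomorphic
    ∧ (∀ x : TA N, revA (revA x) = x) := by
  constructor
  · intro x
    have hgen : ∀ i, Dbar (gen i) = revA (D (gen i)) := by
      intro i
      ext w
      have h := hrev i (FreeMonoid.toList w)
      simp only [coeffD, FreeMonoid.ofList_toList] at h
      rw [h, revA_apply]
    rw [revA_projLen, key D Dbar hleib hleib' hgen, revA_projLen]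
  · exact revA_revA'
end

section
/- In the Chekanov-Eliashberg DGA over Z/2 of the Legendrian right-handed trefoil with generators a_1, a_2 (degree 1) and b_1, b_2, b_3 (degree 0), differential ∂a_1 = 1 + b_1 + b_3 + b_1b_2b_3, ∂a_2 = 1 + b_1 + b_3 + b_3b_2b_1, ∂b_i = 0, and augmentation ε with ε(b_3) = 1 and ε = 0 on all other generators: the linearized cohomology satisfies LCH¹_ε ≅ Z/2 generated by a = [a_1] = [a_2], LCH⁰_ε ≅ (Z/2)² generated by b = [b_2] and c = [b_1 + b_3], the cup product satisfies b ∪ c = a = c ∪ b, and all other products of the generators b, c vanish. -/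
/- STATEMENT 19: For the Chekanov–Eliashberg DGA of the Legendrian right-handed
trefoil, with generators a₁, a₂ (degree 1, basis indices 0, 1) and b₁, b₂, b₃
(degree 0, indices 2, 3, 4), the augmentation ε(b₃) = 1 yields the linearized
A_∞-structure on A* dual to the augmented differential
  ∂^ε a₁ = b₁ + b₃ + b₁b₂ + b₁b₂b₃,  ∂^ε a₂ = b₁ + b₃ + b₂b₁ + b₃b₂b₁,  ∂^ε bᵢ = 0.
Claims: LCH¹_ε ≅ Z/2 generated by a = [a₁] = [a₂]; LCH⁰_ε ≅ (Z/2)² generated by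
b = [b₂] and c = [b₁+b₃]; the cup product satisfies b ∪ c = a = c ∪ b; and all other
products of the generators b, c vanish. -/

open Finset

/-- Coefficients of the augmented differential of the Legendrian trefoil
(indices: 0 = a₁, 1 = a₂, 2 = b₁, 3 = b₂, 4 = b₃). -/
def cTref : Fin 5 → List (Fin 5) → ZMod 2 := fun q w =>
  if q = 0 ∧ (w = [2] ∨ w = [4] ∨ w = [2, 3] ∨ w = [2, 3, 4]) then 1
  else if q = 1 ∧ (w = [2] ∨ w = [4] ∨ w = [3, 2] ∨ w = [4, 3, 2]) then 1
  else 0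

/-- The dual A_∞-structure maps `m_k` on `A* ≅ (Fin 5 → ZMod 2)`. -/
def mTref : ∀ k : ℕ, (Fin k → (Fin 5 → ZMod 2)) → (Fin 5 → ZMod 2) :=
  fun k f q => ∑ w : Fin k → Fin 5, cTref q (List.ofFn w) * ∏ t, f t (w t)

/-- Degree-1 cochains: the span of the duals of a₁, a₂. -/
def InDeg1 (f : Fin 5 → ZMod 2) : Prop := f 2 = 0 ∧ f 3 = 0 ∧ f 4 = 0

/-- Degree-0 cochains: the span of the duals of b₁, b₂, b₃. -/
def InDeg0 (f : Fin 5 → ZMod 2) : Prop := f 0 = 0 ∧ f 1 = 0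


section TrefAux

open Finset

private abbrev V5 := Fin 5 → ZMod 2

private lemma cTref_mem {q : Fin 5} {l : List (Fin 5)} (h : cTref q l ≠ 0) :
    ∀ x ∈ l, x = 2 ∨ x = 3 ∨ x = 4 := by
  intro x hx
  unfold cTref at h
  split_ifs at h with h1 h2
  · rcases h1.2 with rfl|rfl|rfl|rfl <;> simp at hx <;> tauto
  · rcases h2.2 with rfl|rfl|rfl|rfl <;> simp at hx <;> tauto
  · exact absurd rfl h

private lemma mTref_hi {n : ℕ} (g : Fin n → V5) {q : Fin 5}
    (hq0 : q ≠ 0) (hq1 : q ≠ 1) : mTref n g q = 0 := by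
  apply Finset.sum_eq_zero
  intro w _
  have : cTref q (List.ofFn w) = 0 := by simp [cTref, hq0, hq1]
  rw [this, zero_mul]

private lemma mTref_vanish {n : ℕ} (f : Fin n → V5) (s : Fin n)
    (h2 : f s 2 = 0) (h3 : f s 3 = 0) (h4 : f s 4 = 0) : mTref n f = 0 := by
  funext q
  apply Finset.sum_eq_zero
  intro w _
  by_cases hc : cTref q (List.ofFn w) = 0
  · rw [hc, zero_mul]
  · have hm : w s = 2 ∨ w s = 3 ∨ w s = 4 :=
      cTref_mem hc (w s) (by simp [List.mem_ofFn])
    have hz : f s (w s) = 0 := by rcases hm with h|h|h <;> rw [h] <;> assumption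
    rw [Finset.prod_eq_zero (Finset.mem_univ s) hz, mul_zero]

private lemma insComp_zero (i j k : ℕ) (v : ℕ → V5) :
    insComp mTref mTref i j k v = 0 := by
  rw [insComp]
  have hi : i < i + 1 + k := by omega
  apply mTref_vanish _ ⟨i, hi⟩ <;>
    · simp only [lt_self_iff_false, if_false, if_pos rfl]
      exact mTref_hi _ (by decide) (by decide)

private lemma prod_update (k : ℕ) (f : Fin k → V5) (s : Fin k)
    (z : V5) (w : Fin k → Fin 5) :
    ∏ t, (Function.update f s z) t (w t) = z (w s) * ∏ t ∈ univ \ {s}, f t (w t) := by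
  have h : (fun t => (Function.update f s z) t (w t))
      = Function.update (fun t => f t (w t)) s (z (w s)) := by
    funext t
    by_cases ht : t = s
    · subst ht; simp
    · simp [Function.update_of_ne ht]
  calc ∏ t, (Function.update f s z) t (w t)
      = ∏ t, Function.update (fun t => f t (w t)) s (z (w s)) t := by rw [h]
    _ = z (w s) * ∏ t ∈ univ \ {s}, f t (w t) :=
        Finset.prod_update_of_mem (Finset.mem_univ s) _ _

private lemma mTref_multiadd : IsMultiadditive mTref := by
  intro k f s x y
  funext q
  simp only [mTref, Pi.add_apply]
  rw [← Finset.sum_add_distrib]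
  apply Finset.sum_congr rfl
  intro w _
  rw [prod_update, prod_update, prod_update, Pi.add_apply]
  ring

private lemma mTref_ainfty : AInftyRel mTref := by
  intro l _ v
  apply Finset.sum_eq_zero; intro i _
  apply Finset.sum_eq_zero; intro j _
  apply Finset.sum_eq_zero; intro k _
  split_ifs with h
  · exact insComp_zero i j k v
  · rfl

private lemma m1_apply (f : Fin 1 → V5) (q : Fin 5) :
    mTref 1 f q = if q = 0 ∨ q = 1 then f 0 2 + f 0 4 else 0 := by
  have e : mTref 1 f q = ∑ x : Fin 5, cTref q [x] * f 0 x := by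
    rw [mTref]
    apply Fintype.sum_equiv (Equiv.funUnique (Fin 1) (Fin 5))
    intro w
    simp [List.ofFn_succ]
  rw [e, Fin.sum_univ_five]
  fin_cases q <;> simp [cTref]

private lemma m2_apply (f : Fin 2 → V5) (q : Fin 5) :
    mTref 2 f q = if q = 0 then f 0 2 * f 1 3 else if q = 1 then f 0 3 * f 1 2 else 0 := by
  have e : mTref 2 f q = ∑ p : Fin 5 × Fin 5, cTref q [p.1, p.2] * (f 0 p.1 * f 1 p.2) := by
    rw [mTref]
    apply Fintype.sum_equiv (piFinTwoEquiv (fun _ => Fin 5))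
    intro w
    simp [List.ofFn_succ, Fin.prod_univ_two]
  rw [e, Fintype.sum_prod_type]
  simp only [Fin.sum_univ_five]
  fin_cases q <;> simp [cTref]

private lemma dl_apply (f : V5) :
    dl mTref f = fun q => if q = 0 ∨ q = 1 then f 2 + f 4 else 0 := by
  funext q; exact m1_apply _ q

private lemma mu2_apply (a b : V5) :
    mu2 mTref a b = fun q => if q = 0 then a 2 * b 3 else if q = 1 then a 3 * b 2 else 0 := by
  funext q; rw [mu2, m2_apply]; simp

private lemma L2 : ∀ f, InDeg0 f → (dl mTref f = 0 ↔ f 2 = f 4) := by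
  intro f _
  rw [dl_apply]
  constructor
  · intro h
    have h0 := congrFun h 0
    simp at h0
    revert h0
    generalize f 2 = x; generalize f 4 = y
    revert x y; decide
  · intro h
    funext q
    simp only [Pi.zero_apply]
    split_ifs with hq
    · rw [h]
      generalize f 4 = y; revert y; decide
    · rfl

private lemma L3 : ∀ f, InDeg0 f → dl mTref f = 0 →
    ∃! st : ZMod 2 × ZMod 2,
      f = st.1 • (Pi.single 3 1 : V5)
        + st.2 • ((Pi.single 2 1 : V5) + Pi.single 4 1) := by
  intro f hf hz
  have h24 : f 2 = f 4 := (L2 f hf).1 hz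
  refine ⟨(f 3, f 2), ?_, ?_⟩
  · funext q
    fin_cases q <;> simp [Pi.single_apply, hf.1, hf.2, h24]
  · rintro ⟨s, t⟩ h
    have h3 := congrFun h 3
    have h2 := congrFun h 2
    simp [Pi.single_apply] at h2 h3
    simp [h2, h3]

private lemma L4 : ∀ f, InDeg1 f → dl mTref f = 0 := by
  intro f hf
  rw [dl_apply]
  funext q
  simp [hf.1, hf.2.2]

private lemma single2_deg0 : InDeg0 (Pi.single 2 1 : V5) :=
  ⟨by simp [Pi.single_apply], by simp [Pi.single_apply]⟩

private lemma L5 : ∃ u, InDeg0 u ∧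
    dl mTref u = (Pi.single 0 1 : V5) + Pi.single 1 1 := by
  refine ⟨Pi.single 2 1, single2_deg0, ?_⟩
  rw [dl_apply]
  funext q
  fin_cases q <;> simp [Pi.single_apply]

private lemma smul_single_deg0 (z : ZMod 2) : InDeg0 (z • (Pi.single 2 1 : V5)) :=
  ⟨by simp [Pi.single_apply], by simp [Pi.single_apply]⟩

private lemma L6 : ∀ f, InDeg1 f →
    ∃ s : ZMod 2, ∃ u, InDeg0 u ∧ f = s • (Pi.single 0 1 : V5) + dl mTref u := by
  intro f hf
  refine ⟨f 0 + f 1, f 1 • Pi.single 2 1, smul_single_deg0 _, ?_⟩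
  rw [dl_apply]
  funext q
  fin_cases q <;>
    simp [Pi.single_apply, hf.1, hf.2.1, hf.2.2, smul_eq_mul] <;>
    · generalize f 0 = x; generalize f 1 = y; revert x y; decide

private lemma L7 : ¬ ∃ u, InDeg0 u ∧ dl mTref u = (Pi.single 0 1 : V5) := by
  rintro ⟨u, -, hu⟩
  rw [dl_apply] at hu
  have h0 := congrFun hu 0
  have h1 := congrFun hu 1
  simp [Pi.single_apply] at h0 h1
  rw [h1] at h0
  exact zero_ne_one h0

private lemma L8 : ∃ u, InDeg0 u ∧
    dl mTref u = mu2 mTref (Pi.single 3 1 : V5) ((Pi.single 2 1 : V5) + Pi.single 4 1)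
      + Pi.single 0 1 := by
  refine ⟨Pi.single 2 1, single2_deg0, ?_⟩
  rw [dl_apply, mu2_apply]
  funext q
  fin_cases q <;> simp [Pi.single_apply] <;> decide

private lemma L9 : ∃ u, InDeg0 u ∧
    dl mTref u = mu2 mTref ((Pi.single 2 1 : V5) + Pi.single 4 1) (Pi.single 3 1 : V5)
      + Pi.single 0 1 := by
  refine ⟨0, ⟨rfl, rfl⟩, ?_⟩
  rw [dl_apply, mu2_apply]
  funext q
  fin_cases q <;> simp [Pi.single_apply] <;> decide

private lemma L10 : ∃ u, InDeg0 u ∧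
    dl mTref u = mu2 mTref (Pi.single 3 1 : V5) (Pi.single 3 1 : V5) := by
  refine ⟨0, ⟨rfl, rfl⟩, ?_⟩
  rw [dl_apply, mu2_apply]
  funext q
  fin_cases q <;> simp [Pi.single_apply] <;> decide

private lemma L11 : ∃ u, InDeg0 u ∧
    dl mTref u = mu2 mTref ((Pi.single 2 1 : V5) + Pi.single 4 1)
      ((Pi.single 2 1 : V5) + Pi.single 4 1) := by
  refine ⟨0, ⟨rfl, rfl⟩, ?_⟩
  rw [dl_apply, mu2_apply]
  funext q
  fin_cases q <;> simp [Pi.single_apply] <;> decide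

end TrefAux

theorem stmt19 :
    -- names for the relevant cochains
    let a₁ : Fin 5 → ZMod 2 := Pi.single 0 1
    let a₂ : Fin 5 → ZMod 2 := Pi.single 1 1
    let b : Fin 5 → ZMod 2 := Pi.single 3 1            -- b = [b₂]
    let c : Fin 5 → ZMod 2 := Pi.single 2 1 + Pi.single 4 1  -- c = [b₁ + b₃]
    -- `mTref` is an A_∞-structure and b, c, a₁, a₂ are cocycles of the right degrees
    IsAInfty mTref ∧
    -- LCH⁰: the degree-0 cocycles are exactly those with equal b₁- and b₃-coefficients,
    (∀ f, InDeg0 f → (dl mTref f = 0 ↔ f 2 = f 4)) ∧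
    -- there are no degree-0 coboundaries, and LCH⁰ ≅ (Z/2)² generated by b and c:
    (∀ f, InDeg0 f → dl mTref f = 0 →
      ∃! st : ZMod 2 × ZMod 2, f = st.1 • b + st.2 • c) ∧
    -- LCH¹: every degree-1 cochain is a cocycle,
    (∀ f, InDeg1 f → dl mTref f = 0) ∧
    -- [a₁] = [a₂] (call this common class a), LCH¹ ≅ Z/2 generated by a:
    (∃ u, InDeg0 u ∧ dl mTref u = a₁ + a₂) ∧
    (∀ f, InDeg1 f → ∃ s : ZMod 2, ∃ u, InDeg0 u ∧ f = s • a₁ + dl mTref u) ∧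
    (¬ ∃ u, InDeg0 u ∧ dl mTref u = a₁) ∧
    -- cup products: b ∪ c = a = c ∪ b (equalities of cohomology classes) …
    (∃ u, InDeg0 u ∧ dl mTref u = mu2 mTref b c + a₁) ∧
    (∃ u, InDeg0 u ∧ dl mTref u = mu2 mTref c b + a₁) ∧
    -- … and all other products of the generators b, c vanish in cohomology
    (∃ u, InDeg0 u ∧ dl mTref u = mu2 mTref b b) ∧
    (∃ u, InDeg0 u ∧ dl mTref u = mu2 mTref c c) := by
  intro a₁ a₂ b c
  exact ⟨⟨mTref_multiadd, mTref_ainfty⟩, L2, L3, L4, L5, L6, L7, L8, L9, L10, L11⟩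
end
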